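/- Let μ be a complex regular Borel measure with compact support in ℂ^d, and suppose the pushforward ν_g = π_*(|g|²μ) under the projection π(z_1, z') = z' is, for every admissible g, a sum of at most M_0 point masses, with M_0 attained at g = 1 at points ζ_1, ..., ζ_{M_0}. Define μ^j(G) = μ(G ∩ π^{-1}{ζ_j}). Then for every g, ν_g({ζ_j}) = ∫ |g|² dμ^j, and this quantity depends continuously on g in the uniform norm on supp μ; hence for g sufficiently close to 1, ν_g has point masses at exactly the points ζ_1, ..., ζ_{M_0}. -/

import Mathlib

open MeasureTheory Complex

noncomputable section

/-- Integral of a complex-valued function against a complex measure,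
via the Jordan decompositions of the real and imaginary parts. -/
noncomputable def cint {X : Type*} [MeasurableSpace X] (μ : ComplexMeasure X) (f : X → ℂ) : ℂ :=
    ((∫ x, f x ∂μ.re.toJordanDecomposition.posPart)
      - ∫ x, f x ∂μ.re.toJordanDecomposition.negPart)
  + Complex.I * ((∫ x, f x ∂μ.im.toJordanDecomposition.posPart)
      - ∫ x, f x ∂μ.im.toJordanDecomposition.negPart)

/-- The complex measure `μ` is supported in the set `S`. -/
def SuppIn {X : Type*} [MeasurableSpace X] (μ : ComplexMeasure X) (S : Set X) : Prop :=
  ∀ E : Set X, MeasurableSet E → Disjoint E S → μ E = 0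

/-- Regularity of a complex measure: all four parts of the Jordan decompositions are regular. -/
def IsRegularCM {X : Type*} [MeasurableSpace X] [TopologicalSpace X]
    (μ : ComplexMeasure X) : Prop :=
  μ.re.toJordanDecomposition.posPart.Regular ∧ μ.re.toJordanDecomposition.negPart.Regular ∧
  μ.im.toJordanDecomposition.posPart.Regular ∧ μ.im.toJordanDecomposition.negPart.Regular

/-- The monomial `z ^ α` in `ℂ^d`. -/
def mono {d : ℕ} (α : Fin d → ℕ) : (Fin d → ℂ) → ℂ := fun z => ∏ i, z i ^ α i

/-- The moment matrix `a_{αβ} = ∫ z^α conj z^β dμ`. -/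
noncomputable def momentMatrix {d : ℕ} (μ : ComplexMeasure (Fin d → ℂ)) :
    (Fin d → ℕ) → (Fin d → ℕ) → ℂ :=
  fun α β => cint μ (fun z => mono α z * (starRingEnd ℂ) (mono β z))

/-- Rank of an infinite matrix: the dimension of the span of its rows
(equivalently, the supremum of the ranks of its finite submatrices). -/
noncomputable def matRank {I J : Type*} (A : I → J → ℂ) : Cardinal :=
  Module.rank ℂ (Submodule.span ℂ (Set.range A))

/-- `μ` is the linear combination `∑ k, λ k • δ_{z k}` of point masses. -/
def IsPointMassCombo {X : Type*} [MeasurableSpace X] (μ : ComplexMeasure X)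
    {N : ℕ} (Λ : Fin N → ℂ) (z : Fin N → X) : Prop :=
  ∀ E : Set X, MeasurableSet E → μ E = ∑ k, E.indicator (fun _ => Λ k) (z k)

/-- `g` is admissible for the polydisk `P`: `g` is holomorphic and bounded on `P`
and has a bounded holomorphic inverse there. -/
def Admissible {d : ℕ} (P : Set (Fin d → ℂ)) (g : (Fin d → ℂ) → ℂ) : Prop :=
  DifferentiableOn ℂ g P ∧ (∃ C, ∀ z ∈ P, ‖g z‖ ≤ C) ∧
  ∃ h : (Fin d → ℂ) → ℂ, DifferentiableOn ℂ h P ∧ (∃ C, ∀ z ∈ P, ‖h z‖ ≤ C) ∧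
    ∀ z ∈ P, g z * h z = 1



namespace StabAux

variable {X : Type*} [MeasurableSpace X]

/-- A signed measure applied to a measurable set via its Jordan decomposition. -/
lemma signed_apply_jordan (s : SignedMeasure X) {E : Set X} (hE : MeasurableSet E) :
    s E = (s.toJordanDecomposition.posPart E).toReal
      - (s.toJordanDecomposition.negPart E).toReal := by
  conv_lhs => rw [← s.toSignedMeasure_toJordanDecomposition]
  rw [JordanDecomposition.toSignedMeasure, VectorMeasure.sub_apply,
    Measure.toSignedMeasure_apply_measurable hE, Measure.toSignedMeasure_apply_measurable hE]
  rfl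

/-- Jordan decomposition of a restricted signed measure. -/
lemma jordan_restrict (s t : SignedMeasure X) {F : Set X} (hF : MeasurableSet F)
    (h : ∀ E : Set X, MeasurableSet E → t E = s (E ∩ F)) :
    t.toJordanDecomposition.posPart = s.toJordanDecomposition.posPart.restrict F ∧
    t.toJordanDecomposition.negPart = s.toJordanDecomposition.negPart.restrict F := by
  set p := s.toJordanDecomposition.posPart with hp
  set n := s.toJordanDecomposition.negPart with hn
  have hsing : (p.restrict F) ⟂ₘ (n.restrict F) :=
    s.toJordanDecomposition.mutuallySingular.mono Measure.restrict_le_self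
      Measure.restrict_le_self
  have key : t.toJordanDecomposition
      = ⟨p.restrict F, n.restrict F, hsing⟩ := by
    apply SignedMeasure.toJordanDecomposition_eq
    ext E hE
    rw [h E hE, JordanDecomposition.toSignedMeasure, VectorMeasure.sub_apply,
      Measure.toSignedMeasure_apply_measurable hE,
      Measure.toSignedMeasure_apply_measurable hE]
    simp only [Measure.real, Measure.restrict_apply hE]
    exact signed_apply_jordan s (hE.inter hF)
  rw [key]
  exact ⟨rfl, rfl⟩

/-- Jordan parts vanish on measurable sets where the signed measure vanishes hereditarily. -/
lemma jordan_parts_zero (s : SignedMeasure X) {K : Set X} (hK : MeasurableSet K)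
    (h : ∀ E : Set X, MeasurableSet E → Disjoint E K → s E = 0) :
    s.toJordanDecomposition.posPart Kᶜ = 0 ∧ s.toJordanDecomposition.negPart Kᶜ = 0 := by
  set p := s.toJordanDecomposition.posPart with hp
  set n := s.toJordanDecomposition.negPart with hn
  obtain ⟨u, hu, hpu, hnuc⟩ := s.toJordanDecomposition.mutuallySingular
  have hmeas1 : MeasurableSet (Kᶜ ∩ uᶜ) := hK.compl.inter hu.compl
  have hmeas2 : MeasurableSet (Kᶜ ∩ u) := hK.compl.inter hu
  have hd1 : Disjoint (Kᶜ ∩ uᶜ) K :=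
    disjoint_compl_left.mono_left Set.inter_subset_left
  have hd2 : Disjoint (Kᶜ ∩ u) K :=
    disjoint_compl_left.mono_left Set.inter_subset_left
  have hn1 : n (Kᶜ ∩ uᶜ) = 0 :=
    le_antisymm (hnuc ▸ measure_mono Set.inter_subset_right) zero_le
  have hp2 : p (Kᶜ ∩ u) = 0 :=
    le_antisymm (hpu ▸ measure_mono Set.inter_subset_right) zero_le
  have hp1 : p (Kᶜ ∩ uᶜ) = 0 := by
    have h0 := signed_apply_jordan s hmeas1
    rw [h _ hmeas1 hd1, hn1] at h0
    simp only [ENNReal.toReal_zero, sub_zero] at h0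
    exact (ENNReal.toReal_eq_zero_iff _).mp h0.symm |>.resolve_right (measure_ne_top _ _)
  have hn2 : n (Kᶜ ∩ u) = 0 := by
    have h0 := signed_apply_jordan s hmeas2
    rw [h _ hmeas2 hd2, hp2] at h0
    simp only [ENNReal.toReal_zero, zero_sub] at h0
    have h0' : (n (Kᶜ ∩ u)).toReal = 0 := by linarith
    exact ((ENNReal.toReal_eq_zero_iff _).mp h0').resolve_right (measure_ne_top _ _)
  constructor
  · have := measure_inter_add_diff (μ := p) Kᶜ hu
    rw [Set.diff_eq, hp1, hp2] at this
    simpa using this.symm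
  · have := measure_inter_add_diff (μ := n) Kᶜ hu
    rw [Set.diff_eq, hn1, hn2] at this
    simpa using this.symm

/-- `cint` of a "restricted" complex measure is the `cint` of the indicator. -/
lemma cint_restrict (μ ν : ComplexMeasure X) {F : Set X} (hF : MeasurableSet F)
    (h : ∀ E : Set X, MeasurableSet E → ν E = μ (E ∩ F)) (f : X → ℂ) :
    cint ν f = cint μ (F.indicator f) := by
  have hre := jordan_restrict μ.re ν.re hF (fun E hE => by
    exact congrArg Complex.re (h E hE))
  have him := jordan_restrict μ.im ν.im hF (fun E hE => by
    exact congrArg Complex.im (h E hE))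
  rw [cint, cint, hre.1, hre.2, him.1, him.2]
  rw [← integral_indicator hF, ← integral_indicator hF, ← integral_indicator hF,
    ← integral_indicator hF]

/-- `cint` of the constant function `1` is the total mass. -/
lemma cint_one (m : ComplexMeasure X) : cint m (fun _ => (1 : ℂ)) = m Set.univ := by
  have hre := signed_apply_jordan m.re MeasurableSet.univ
  have him := signed_apply_jordan m.im MeasurableSet.univ
  simp only [ComplexMeasure.re_apply, VectorMeasure.mapRange_apply] at hre
  simp only [ComplexMeasure.im_apply, VectorMeasure.mapRange_apply] at him
  rw [cint]
  simp only [integral_const, smul_eq_mul, mul_one]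
  apply Complex.ext
  · simpa [Measure.real] using hre.symm.trans (rfl : _ = (m Set.univ).re)
  · simpa [Measure.real] using him.symm.trans (rfl : _ = (m Set.univ).im)

/-- Bound on the difference of integrals of `f` and `1` against a finite measure
vanishing off `K`, for `f` continuous on `K`. -/
lemma integral_sub_one_bound {X : Type*} [MeasurableSpace X] [TopologicalSpace X]
    [OpensMeasurableSpace X] [SecondCountableTopology X]
    (q : Measure X) [IsFiniteMeasure q] {K : Set X} (hKm : MeasurableSet K)
    (hq : q Kᶜ = 0) {f : X → ℂ} (hf : ContinuousOn f K) {ε : ℝ} (hε : 0 ≤ ε)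
    (hb : ∀ z ∈ K, ‖f z - 1‖ ≤ ε) :
    ‖(∫ x, f x ∂q) - ∫ x, (1 : ℂ) ∂q‖ ≤ ε * (q Set.univ).toReal := by
  have hres : q.restrict K = q :=
    Measure.restrict_eq_self_of_ae_mem (by
      rw [Filter.eventually_iff, mem_ae_iff]; simpa using hq)
  have hmeas : AEStronglyMeasurable f q := by
    rw [← hres]; exact hf.aestronglyMeasurable hKm
  have haeK : ∀ᵐ x ∂q, x ∈ K := by
    rw [Filter.eventually_iff, mem_ae_iff]; simpa using hq
  have haeb : ∀ᵐ x ∂q, ‖f x - 1‖ ≤ ε := haeK.mono (fun x hx => hb x hx)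
  have hint : Integrable f q := by
    refine ⟨hmeas, ?_⟩
    refine MeasureTheory.HasFiniteIntegral.of_bounded (C := ε + 1) ?_
    exact haeb.mono (fun x hx => by
      calc ‖f x‖ ≤ ‖f x - 1‖ + ‖(1 : ℂ)‖ := by
            simpa using norm_add_le (f x - 1) 1
        _ ≤ ε + 1 := by simp at *; linarith)
  rw [← integral_sub hint (integrable_const 1)]
  exact norm_integral_le_of_norm_le_const haeb

/-- Total variation bound for a complex measure: sum of the four Jordan part masses. -/
def tot {X : Type*} [MeasurableSpace X] (m : ComplexMeasure X) : ℝ :=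
  (m.re.toJordanDecomposition.posPart Set.univ).toReal
  + (m.re.toJordanDecomposition.negPart Set.univ).toReal
  + (m.im.toJordanDecomposition.posPart Set.univ).toReal
  + (m.im.toJordanDecomposition.negPart Set.univ).toReal

lemma tot_nonneg {X : Type*} [MeasurableSpace X] (m : ComplexMeasure X) : 0 ≤ tot m := by
  unfold tot; positivity

/-- Continuity estimate: `cint m f` is close to `cint m 1` when `f` is close to `1` on `K`. -/
lemma cint_sub_one_bound {X : Type*} [MeasurableSpace X] [TopologicalSpace X]
    [OpensMeasurableSpace X] [SecondCountableTopology X]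
    (m : ComplexMeasure X) {K : Set X} (hKm : MeasurableSet K)
    (h1 : m.re.toJordanDecomposition.posPart Kᶜ = 0)
    (h2 : m.re.toJordanDecomposition.negPart Kᶜ = 0)
    (h3 : m.im.toJordanDecomposition.posPart Kᶜ = 0)
    (h4 : m.im.toJordanDecomposition.negPart Kᶜ = 0)
    {f : X → ℂ} (hf : ContinuousOn f K) {ε : ℝ} (hε : 0 ≤ ε)
    (hb : ∀ z ∈ K, ‖f z - 1‖ ≤ ε) :
    ‖cint m f - cint m (fun _ => (1 : ℂ))‖ ≤ ε * tot m := by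
  set A1 := ∫ x, f x ∂m.re.toJordanDecomposition.posPart
  set A2 := ∫ x, f x ∂m.re.toJordanDecomposition.negPart
  set A3 := ∫ x, f x ∂m.im.toJordanDecomposition.posPart
  set A4 := ∫ x, f x ∂m.im.toJordanDecomposition.negPart
  set B1 := ∫ _, (1 : ℂ) ∂m.re.toJordanDecomposition.posPart
  set B2 := ∫ _, (1 : ℂ) ∂m.re.toJordanDecomposition.negPart
  set B3 := ∫ _, (1 : ℂ) ∂m.im.toJordanDecomposition.posPart
  set B4 := ∫ _, (1 : ℂ) ∂m.im.toJordanDecomposition.negPart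
  have e1 := integral_sub_one_bound _ hKm h1 hf hε hb
  have e2 := integral_sub_one_bound _ hKm h2 hf hε hb
  have e3 := integral_sub_one_bound _ hKm h3 hf hε hb
  have e4 := integral_sub_one_bound _ hKm h4 hf hε hb
  have hrw : cint m f - cint m (fun _ => (1 : ℂ))
      = ((A1 - B1) - (A2 - B2)) + Complex.I * ((A3 - B3) - (A4 - B4)) := by
    rw [cint, cint]; ring
  rw [hrw]
  calc ‖((A1 - B1) - (A2 - B2)) + Complex.I * ((A3 - B3) - (A4 - B4))‖
      ≤ ‖(A1 - B1) - (A2 - B2)‖ + ‖Complex.I * ((A3 - B3) - (A4 - B4))‖ := norm_add_le _ _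
    _ = ‖(A1 - B1) - (A2 - B2)‖ + ‖(A3 - B3) - (A4 - B4)‖ := by
        rw [norm_mul, Complex.norm_I, one_mul]
    _ ≤ (‖A1 - B1‖ + ‖A2 - B2‖) + (‖A3 - B3‖ + ‖A4 - B4‖) := by
        gcongr <;> exact norm_sub_le _ _
    _ ≤ ε * tot m := by unfold tot; nlinarith [e1, e2, e3, e4]

end StabAux

theorem stability_of_supporting_points
    {e M₀ : ℕ} (μ : ComplexMeasure (Fin (e + 1) → ℂ)) (K : Set (Fin (e + 1) → ℂ))
    (hK : IsCompact K) (hsupp : SuppIn μ K) (hreg : IsRegularCM μ)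
    (c : Fin (e + 1) → ℂ) (r : Fin (e + 1) → ℝ) (hr : ∀ i, 0 < r i)
    (hKP : K ⊆ {z : Fin (e + 1) → ℂ | ∀ i, ‖z i - c i‖ < r i})
    -- every weighted pushforward is a combination of at most M₀ point masses
    (hmax : ∀ g : (Fin (e + 1) → ℂ) → ℂ,
      Admissible {z : Fin (e + 1) → ℂ | ∀ i, ‖z i - c i‖ < r i} g →
      ∀ νg : ComplexMeasure (Fin (e + 1) → ℂ),
        (∀ E : Set (Fin (e + 1) → ℂ), MeasurableSet E →
          νg E = cint μ (E.indicator fun w => ((‖g w‖ ^ 2 : ℝ) : ℂ))) →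
        ∃ (M : ℕ), M ≤ M₀ ∧ ∃ (lam : Fin M → ℂ) (ζ' : Fin M → (Fin e → ℂ)),
          (∀ j, lam j ≠ 0) ∧ Function.Injective ζ' ∧
          IsPointMassCombo
            (νg.map (fun (z : Fin (e + 1) → ℂ) (i : Fin e) => z i.succ)) lam ζ')
    -- the maximal number M₀ is attained at g = 1, at the points ζ j
    (ζ : Fin M₀ → (Fin e → ℂ)) (hζ : Function.Injective ζ)
    (lam₀ : Fin M₀ → ℂ) (hlam₀ : ∀ j, lam₀ j ≠ 0)
    (h1 : IsPointMassCombo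
      (μ.map (fun (z : Fin (e + 1) → ℂ) (i : Fin e) => z i.succ)) lam₀ ζ)
    -- the measures μʲ supported over the fibers of the ζ j
    (μj : Fin M₀ → ComplexMeasure (Fin (e + 1) → ℂ))
    (hμj : ∀ j, ∀ E : Set (Fin (e + 1) → ℂ), MeasurableSet E →
      μj j E = μ (E ∩ (fun (z : Fin (e + 1) → ℂ) (i : Fin e) => z i.succ) ⁻¹' {ζ j})) :
    -- (a) the mass of ν_g at ζ j is ∫ |g|² dμʲ
    (∀ g : (Fin (e + 1) → ℂ) → ℂ,
      Admissible {z : Fin (e + 1) → ℂ | ∀ i, ‖z i - c i‖ < r i} g →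
      ∀ νg : ComplexMeasure (Fin (e + 1) → ℂ),
        (∀ E : Set (Fin (e + 1) → ℂ), MeasurableSet E →
          νg E = cint μ (E.indicator fun w => ((‖g w‖ ^ 2 : ℝ) : ℂ))) →
        ∀ j, νg.map (fun (z : Fin (e + 1) → ℂ) (i : Fin e) => z i.succ) {ζ j}
          = cint (μj j) (fun z => ((‖g z‖ ^ 2 : ℝ) : ℂ))) ∧
    -- (b) for g uniformly close to 1 on supp μ the masses sit exactly at the ζ j
    (∃ δ > (0 : ℝ), ∀ g : (Fin (e + 1) → ℂ) → ℂ,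
      Admissible {z : Fin (e + 1) → ℂ | ∀ i, ‖z i - c i‖ < r i} g →
      (∀ z ∈ K, ‖g z - 1‖ < δ) →
      ∀ νg : ComplexMeasure (Fin (e + 1) → ℂ),
        (∀ E : Set (Fin (e + 1) → ℂ), MeasurableSet E →
          νg E = cint μ (E.indicator fun w => ((‖g w‖ ^ 2 : ℝ) : ℂ))) →
        (∀ j, νg.map (fun (z : Fin (e + 1) → ℂ) (i : Fin e) => z i.succ) {ζ j} ≠ 0) ∧
        IsPointMassCombo (νg.map (fun (z : Fin (e + 1) → ℂ) (i : Fin e) => z i.succ))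
          (fun j => νg.map (fun (z : Fin (e + 1) → ℂ) (i : Fin e) => z i.succ) {ζ j}) ζ) := by
  classical
  set π : (Fin (e + 1) → ℂ) → (Fin e → ℂ) := fun (z : Fin (e + 1) → ℂ) (i : Fin e) => z i.succ
    with hπdef
  have hπ : Measurable π := measurable_pi_lambda _ (fun i => measurable_pi_apply _)
  have hFmeas : ∀ j : Fin M₀, MeasurableSet (π ⁻¹' {ζ j}) :=
    fun j => hπ (measurableSet_singleton _)
  have hKm : MeasurableSet K := hK.isClosed.measurableSet
  -- part (a)
  have parta : ∀ g : (Fin (e + 1) → ℂ) → ℂ,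
      Admissible {z : Fin (e + 1) → ℂ | ∀ i, ‖z i - c i‖ < r i} g →
      ∀ νg : ComplexMeasure (Fin (e + 1) → ℂ),
        (∀ E : Set (Fin (e + 1) → ℂ), MeasurableSet E →
          νg E = cint μ (E.indicator fun w => ((‖g w‖ ^ 2 : ℝ) : ℂ))) →
        ∀ j, νg.map π {ζ j} = cint (μj j) (fun z => ((‖g z‖ ^ 2 : ℝ) : ℂ)) := by
    intro g hg νg hνg j
    rw [VectorMeasure.map_apply _ hπ (measurableSet_singleton _), hνg _ (hFmeas j)]
    exact (StabAux.cint_restrict μ (μj j) (hFmeas j) (hμj j) _).symm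
  -- Jordan parts of μ vanish off K
  have hzre := StabAux.jordan_parts_zero μ.re hKm (fun E hE hd => by
    exact (congrArg Complex.re (hsupp E hE hd)).trans Complex.zero_re)
  have hzim := StabAux.jordan_parts_zero μ.im hKm (fun E hE hd => by
    exact (congrArg Complex.im (hsupp E hE hd)).trans Complex.zero_im)
  -- Jordan parts of μj j are restrictions
  have hjre : ∀ j, (μj j).re.toJordanDecomposition.posPart
        = μ.re.toJordanDecomposition.posPart.restrict (π ⁻¹' {ζ j}) ∧
      (μj j).re.toJordanDecomposition.negPart
        = μ.re.toJordanDecomposition.negPart.restrict (π ⁻¹' {ζ j}) :=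
    fun j => StabAux.jordan_restrict μ.re (μj j).re (hFmeas j) (fun E hE => by
      exact congrArg Complex.re (hμj j E hE))
  have hjim : ∀ j, (μj j).im.toJordanDecomposition.posPart
        = μ.im.toJordanDecomposition.posPart.restrict (π ⁻¹' {ζ j}) ∧
      (μj j).im.toJordanDecomposition.negPart
        = μ.im.toJordanDecomposition.negPart.restrict (π ⁻¹' {ζ j}) :=
    fun j => StabAux.jordan_restrict μ.im (μj j).im (hFmeas j) (fun E hE => by
      exact congrArg Complex.im (hμj j E hE))
  have hKc1 : ∀ j, (μj j).re.toJordanDecomposition.posPart Kᶜ = 0 := fun j => by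
    rw [(hjre j).1, Measure.restrict_apply hKm.compl]
    exact measure_mono_null Set.inter_subset_left hzre.1
  have hKc2 : ∀ j, (μj j).re.toJordanDecomposition.negPart Kᶜ = 0 := fun j => by
    rw [(hjre j).2, Measure.restrict_apply hKm.compl]
    exact measure_mono_null Set.inter_subset_left hzre.2
  have hKc3 : ∀ j, (μj j).im.toJordanDecomposition.posPart Kᶜ = 0 := fun j => by
    rw [(hjim j).1, Measure.restrict_apply hKm.compl]
    exact measure_mono_null Set.inter_subset_left hzim.1
  have hKc4 : ∀ j, (μj j).im.toJordanDecomposition.negPart Kᶜ = 0 := fun j => by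
    rw [(hjim j).2, Measure.restrict_apply hKm.compl]
    exact measure_mono_null Set.inter_subset_left hzim.2
  -- choice of δ
  set T : Fin M₀ → ℝ := fun j => StabAux.tot (μj j) with hTdef
  set gδ : Fin M₀ → ℝ := fun j => min 1 (‖lam₀ j‖ / (3 * (T j + 1))) with hgδdef
  set δ : ℝ := ∏ j, gδ j with hδdef
  have hT0 : ∀ j, 0 ≤ T j := fun j => StabAux.tot_nonneg _
  have hgδpos : ∀ j, 0 < gδ j := fun j =>
    lt_min one_pos (div_pos (norm_pos_iff.2 (hlam₀ j)) (by nlinarith [hT0 j]))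
  have hgδle1 : ∀ j, gδ j ≤ 1 := fun j => min_le_left _ _
  have hδpos : 0 < δ := Finset.prod_pos (fun j _ => hgδpos j)
  have hδ1 : δ ≤ 1 := Finset.prod_le_one (fun i _ => (hgδpos i).le) (fun i _ => hgδle1 i)
  have hδle : ∀ j, δ ≤ gδ j := by
    intro j
    calc δ = gδ j * ∏ i ∈ Finset.univ.erase j, gδ i :=
          (Finset.mul_prod_erase Finset.univ gδ (Finset.mem_univ j)).symm
      _ ≤ gδ j * 1 := by
          refine mul_le_mul_of_nonneg_left ?_ (hgδpos j).le
          exact Finset.prod_le_one (fun i _ => (hgδpos i).le) (fun i _ => hgδle1 i)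
      _ = gδ j := mul_one _
  refine ⟨parta, δ, hδpos, ?_⟩
  intro g hg hgclose νg hνg
  -- the weight function
  set f : (Fin (e + 1) → ℂ) → ℂ := fun w => ((‖g w‖ ^ 2 : ℝ) : ℂ) with hfdef
  -- pointwise closeness of |g|² to 1 on K
  have hfb : ∀ z ∈ K, ‖f z - 1‖ ≤ 3 * δ := by
    intro z hz
    have h1' : ‖g z - 1‖ < δ := hgclose z hz
    have h2 : |‖g z‖ - 1| ≤ ‖g z - 1‖ := by
      simpa using abs_norm_sub_norm_le (g z) 1
    have h3 : ‖f z - 1‖ = |‖g z‖ ^ 2 - 1| := by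
      rw [hfdef]
      rw [show ((‖g z‖ ^ 2 : ℝ) : ℂ) - 1 = ((‖g z‖ ^ 2 - 1 : ℝ) : ℂ) by push_cast; ring]
      exact Complex.norm_real _
    have hnn : 0 ≤ ‖g z‖ := norm_nonneg _
    have ha2 : ‖g z‖ ≤ 2 := by
      have := le_abs_self (‖g z‖ - 1); linarith
    have key : |‖g z‖ ^ 2 - 1| ≤ |‖g z‖ - 1| * 3 := by
      rw [show ‖g z‖ ^ 2 - 1 = (‖g z‖ - 1) * (‖g z‖ + 1) by ring, abs_mul]
      refine mul_le_mul_of_nonneg_left ?_ (abs_nonneg _)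
      have habs : |‖g z‖ + 1| = ‖g z‖ + 1 := abs_of_nonneg (by linarith)
      rw [habs]; linarith
    rw [h3]; linarith
  -- continuity of f on K
  have hgcont : ContinuousOn g K := hg.1.continuousOn.mono hKP
  have hcontf : ContinuousOn f K :=
    (Complex.continuous_ofReal.comp ((continuous_pow 2).comp continuous_norm)).comp_continuousOn
      hgcont
  -- identification of lam₀ j
  have hlam_eq : ∀ j, cint (μj j) (fun _ => (1 : ℂ)) = lam₀ j := by
    intro j
    rw [StabAux.cint_one]
    have huniv : μj j Set.univ = μ (Set.univ ∩ π ⁻¹' {ζ j}) := hμj j _ MeasurableSet.univ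
    rw [huniv, Set.univ_inter]
    have hmap : μ.map π {ζ j} = μ (π ⁻¹' {ζ j}) :=
      VectorMeasure.map_apply _ hπ (measurableSet_singleton _)
    rw [← hmap, h1 _ (measurableSet_singleton _)]
    rw [Finset.sum_eq_single j (fun k _ hkj => Set.indicator_of_notMem (by
        simp only [Set.mem_singleton_iff]
        exact fun hc => hkj (hζ hc)) _)
      (fun h => absurd (Finset.mem_univ _) h)]
    exact Set.indicator_of_mem (Set.mem_singleton _) _
  -- the mass estimate
  have hest : ∀ j, ‖cint (μj j) f - lam₀ j‖ < ‖lam₀ j‖ := by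
    intro j
    have hbd := StabAux.cint_sub_one_bound (μj j) hKm (hKc1 j) (hKc2 j) (hKc3 j) (hKc4 j)
      hcontf (by linarith : (0 : ℝ) ≤ 3 * δ) hfb
    rw [hlam_eq j] at hbd
    have hδj : δ ≤ ‖lam₀ j‖ / (3 * (T j + 1)) := (hδle j).trans (min_le_right _ _)
    have hδj' : δ * (3 * (T j + 1)) ≤ ‖lam₀ j‖ :=
      (le_div_iff₀ (by nlinarith [hT0 j])).mp hδj
    have hL : 0 < ‖lam₀ j‖ := norm_pos_iff.2 (hlam₀ j)
    have : 3 * δ * StabAux.tot (μj j) < ‖lam₀ j‖ := by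
      have hTj : StabAux.tot (μj j) = T j := rfl
      rw [hTj]; nlinarith [hT0 j]
    calc ‖cint (μj j) f - lam₀ j‖ ≤ 3 * δ * StabAux.tot (μj j) := hbd
      _ < ‖lam₀ j‖ := this
  have hm_ne : ∀ j, νg.map π {ζ j} ≠ 0 := by
    intro j h0
    have hmass := parta g hg νg hνg j
    rw [h0] at hmass
    have := hest j
    rw [← hmass, zero_sub, norm_neg] at this
    exact lt_irrefl _ this
  refine ⟨hm_ne, ?_⟩
  obtain ⟨M, hM, lam, ζ', hlamne, hζ'inj, hcombo⟩ := hmax g hg νg hνg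
  have hexist : ∀ j : Fin M₀, ∃ k, ζ' k = ζ j := by
    intro j
    by_contra hcon
    push_neg at hcon
    apply hm_ne j
    rw [hcombo {ζ j} (measurableSet_singleton _)]
    refine Finset.sum_eq_zero (fun k _ => Set.indicator_of_notMem (by
      simpa using hcon k) _)
  choose σ hσ using hexist
  have hσinj : Function.Injective σ := fun a b hab => hζ (by rw [← hσ a, ← hσ b, hab])
  have hcard : M = M₀ := le_antisymm hM (by simpa using Fintype.card_le_of_injective σ hσinj)
  have hσbij : Function.Bijective σ :=
    (Fintype.bijective_iff_injective_and_card σ).2 ⟨hσinj, by simp [hcard]⟩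
  have hmlam : ∀ j, νg.map π {ζ j} = lam (σ j) := by
    intro j
    rw [hcombo {ζ j} (measurableSet_singleton _)]
    rw [Finset.sum_eq_single (σ j) (fun k _ hk => Set.indicator_of_notMem (by
        simp only [Set.mem_singleton_iff]
        exact fun hc => hk (hζ'inj (hc.trans (hσ j).symm))) _)
      (fun h => absurd (Finset.mem_univ _) h)]
    exact Set.indicator_of_mem (by rw [hσ j]; exact Set.mem_singleton _) _
  intro E hE
  rw [hcombo E hE]
  refine (Fintype.sum_bijective σ hσbij _ _ (fun j => ?_)).symm
  simp only [hmlam j, hσ j]
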